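/- Let c_0 ∉ M and δ_0 small as above. For each fixed ω = (v_0, v_1, ...) ∈ D(0,1)^ℕ, the function λ ↦ g_{λ,ω}(0), defined as the limit of (1/2^n) ln|f^n_{λ,ω}(0)| with parameters c_n = c_0 + λ v_n, is harmonic on the disk D(0, δ_0). The limit is locally uniform in λ, each term λ ↦ (1/2^n) ln|f^n_{λ,ω}(0)| being harmonic for n large. -/

import Mathlib

open Metric Complex Filter

/-- The quadratic polynomial `f_c(z) = z^2 + c`. -/
noncomputable def fc (c z : ℂ) : ℂ := z ^ 2 + c

/-- The non-autonomous orbit: `orbitC ω z n = f_{ω(n-1)} ∘ ... ∘ f_{ω 0} (z)`. -/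
noncomputable def orbitC (ω : ℕ → ℂ) (z : ℂ) : ℕ → ℂ
  | 0 => z
  | n + 1 => fc (ω n) (orbitC ω z n)

-- The Green function at the critical point: `g_ω(0) = lim_n 2^{-n} ln |f^n_ω(0)|` when `0`
-- escapes to infinity, and `0` otherwise.
open Classical in
noncomputable def green0 (ω : ℕ → ℂ) : ℝ :=
  if Tendsto (fun n => ‖orbitC ω 0 n‖) atTop atTop then
    limUnder atTop (fun n : ℕ => Real.log (‖orbitC ω 0 n‖) / 2 ^ n)
  else 0

/-- The Mandelbrot set: parameters `c` for which the orbit of `0` under `z ↦ z^2 + c`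
is bounded. -/
def mandelbrot : Set ℂ :=
  {c | Bornology.IsBounded (Set.range fun n => orbitC (fun _ => c) 0 n)}

open Topology


@[reducible] noncomputable def Zf (c0 : ℂ) (v : ℕ → ℂ) (lam : ℂ) : ℕ → ℂ :=
  orbitC (fun k => c0 + lam * v k) 0

lemma Zf_succ (c0 : ℂ) (v : ℕ → ℂ) (lam : ℂ) (n : ℕ) :
    Zf c0 v lam (n + 1) = (Zf c0 v lam n) ^ 2 + (c0 + lam * v n) := rfl

lemma Zf_diff (c0 : ℂ) (v : ℕ → ℂ) (n : ℕ) :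
    Differentiable ℂ (fun lam : ℂ => Zf c0 v lam n) := by
  induction n with
  | zero => exact differentiable_const 0
  | succ n ih =>
      have h : (fun lam : ℂ => Zf c0 v lam (n+1))
          = fun lam => (Zf c0 v lam n) ^ 2 + (c0 + lam * v n) := rfl
      rw [h]
      exact (ih.pow 2).add ((differentiable_const c0).add
        (differentiable_id.mul (differentiable_const _)))

lemma step_ge {A : ℝ} (hA : 1 ≤ A) {c z : ℂ} (hc : ‖c‖ ≤ A)
    (hz : A + 3 ≤ ‖z‖) : 2 * ‖z‖ ≤ ‖z ^ 2 + c‖ := by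
  have h1 : ‖z ^ 2‖ ≤ ‖z ^ 2 + c‖ + ‖c‖ := by
    have h0 : z ^ 2 + c + -c = z ^ 2 := by ring
    have h1 := norm_add_le (z ^ 2 + c) (-c)
    rw [h0, norm_neg] at h1
    exact h1
  have h2 : ‖z ^ 2‖ = ‖z‖ ^ 2 := by simp
  nlinarith [norm_nonneg z, norm_nonneg c, norm_nonneg (z ^ 2 + c)]

lemma growth (ω : ℕ → ℂ) {A : ℝ} (hA : 1 ≤ A) (hc : ∀ n, ‖ω n‖ ≤ A)
    {N : ℕ} (hN : A + 3 ≤ ‖orbitC ω 0 N‖) :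
    ∀ j : ℕ, 2 ^ j * (A + 3) ≤ ‖orbitC ω 0 (N + j)‖ := by
  intro j
  induction j with
  | zero => simpa using hN
  | succ j ih =>
      have h2j : (1:ℝ) ≤ 2 ^ j := one_le_pow₀ one_le_two
      have h1 : A + 3 ≤ ‖orbitC ω 0 (N + j)‖ := by nlinarith
      have key := step_ge hA (hc (N + j)) h1
      have e : orbitC ω 0 (N + (j+1)) = (orbitC ω 0 (N + j)) ^ 2 + ω (N + j) := rfl
      rw [e]
      calc (2:ℝ) ^ (j+1) * (A + 3) = 2 * (2 ^ j * (A + 3)) := by ring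
        _ ≤ 2 * ‖orbitC ω 0 (N + j)‖ := by linarith
        _ ≤ _ := key

lemma log_bound {w : ℂ} (hw : ‖w - 1‖ ≤ 1/2) :
    w ∈ Complex.slitPlane ∧ |Real.log (‖w‖)| ≤ 1 ∧
      ‖Complex.log w‖ ≤ 5 := by
  have habs : |‖w‖ - 1| ≤ 1/2 := by
    exact le_trans (by simpa using abs_norm_sub_norm_le w 1) hw
  obtain ⟨h1', h2'⟩ := abs_le.1 habs
  have h1 : 1/2 ≤ ‖w‖ := by linarith
  have h2 : ‖w‖ ≤ 3/2 := by linarith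
  have hre : (1:ℝ)/2 ≤ w.re := by
    have h3 : |(w - 1).re| ≤ ‖w - 1‖ := Complex.abs_re_le_norm _
    have h4 : (w - 1).re = w.re - 1 := by simp
    rw [h4] at h3
    obtain ⟨h5, _⟩ := abs_le.1 h3
    linarith
  have hslit : w ∈ Complex.slitPlane := Complex.mem_slitPlane_iff.2 (Or.inl (by linarith))
  have hlog : |Real.log (‖w‖)| ≤ 1 := by
    rw [abs_le]
    constructor
    · have hmono : Real.log (1/2) ≤ Real.log (‖w‖) :=
        Real.log_le_log (by norm_num) h1
      have hl2 : Real.log (1/2) = -Real.log 2 := by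
        rw [one_div, Real.log_inv]
      have := Real.log_two_lt_d9
      linarith
    · have := Real.log_le_sub_one_of_pos (lt_of_lt_of_le (by norm_num) h1)
      linarith
  refine ⟨hslit, hlog, ?_⟩
  have him : |(Complex.log w).im| ≤ Real.pi := by
    rw [Complex.log_im]; exact Complex.abs_arg_le_pi w
  have hre' : |(Complex.log w).re| ≤ 1 := by rw [Complex.log_re]; exact hlog
  have h6 := Complex.norm_le_abs_re_add_abs_im (Complex.log w)
  have hpi := Real.pi_lt_d2
  linarith

lemma perturb (c0 : ℂ) (v : ℕ → ℂ) (hv : ∀ n, ‖v n‖ < 1)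
    (M : ℝ) (N : ℕ) (hM : ∀ k ≤ N, ‖Zf c0 v 0 k‖ + 2 ≤ M)
    (lam : ℂ) (hlam2 : (2*M+1)^N * ‖lam‖ ≤ 1/2) :
    ∀ k ≤ N, ‖Zf c0 v lam k - Zf c0 v 0 k‖ ≤ (2*M+1)^k * ‖lam‖ := by
  have hM0 : 2 ≤ M := by
    have h := hM 0 (Nat.zero_le N)
    have := norm_nonneg (Zf c0 v 0 0)
    linarith
  have hM1 : (1:ℝ) ≤ 2*M+1 := by linarith
  intro k
  induction k with
  | zero =>
      intro _
      simp only [pow_zero, one_mul]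
      have : Zf c0 v lam 0 - Zf c0 v 0 0 = 0 := by simp [Zf, orbitC]
      rw [this]
      simpa using norm_nonneg lam
  | succ k ih =>
      intro hk1
      have hk : k ≤ N := Nat.le_of_succ_le hk1
      have hd := ih hk
      have hl0 := norm_nonneg lam
      have hMk : (2*M+1)^k ≤ (2*M+1)^N := pow_le_pow_right₀ hM1 hk
      have hP1 : (1:ℝ) ≤ (2*M+1)^k := one_le_pow₀ hM1
      have hdk : ‖Zf c0 v lam k - Zf c0 v 0 k‖ ≤ 1/2 := by
        have h1 : (2*M+1)^k * ‖lam‖ ≤ (2*M+1)^N * ‖lam‖ :=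
          mul_le_mul_of_nonneg_right hMk hl0
        linarith
      have hb : ‖Zf c0 v 0 k‖ + 2 ≤ M := hM k hk
      have ha : ‖Zf c0 v lam k‖ ≤ M := by
        have h1 : Zf c0 v lam k = (Zf c0 v lam k - Zf c0 v 0 k) + Zf c0 v 0 k := by ring
        have h2 := norm_add_le (Zf c0 v lam k - Zf c0 v 0 k) (Zf c0 v 0 k)
        rw [← h1] at h2
        linarith
      have estep : Zf c0 v lam (k+1) - Zf c0 v 0 (k+1)
          = (Zf c0 v lam k - Zf c0 v 0 k) * (Zf c0 v lam k + Zf c0 v 0 k) + lam * v k := by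
        rw [Zf_succ, Zf_succ]
        ring
      rw [estep]
      have t1 := norm_add_le
        ((Zf c0 v lam k - Zf c0 v 0 k) * (Zf c0 v lam k + Zf c0 v 0 k)) (lam * v k)
      rw [norm_mul, norm_mul] at t1
      have hsum : ‖Zf c0 v lam k + Zf c0 v 0 k‖ ≤ 2*M := by
        have := norm_add_le (Zf c0 v lam k) (Zf c0 v 0 k)
        linarith
      have hvk : ‖v k‖ ≤ 1 := le_of_lt (hv k)
      calc ‖(Zf c0 v lam k - Zf c0 v 0 k) * (Zf c0 v lam k + Zf c0 v 0 k) + lam * v k‖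
          ≤ ‖Zf c0 v lam k - Zf c0 v 0 k‖ * ‖Zf c0 v lam k + Zf c0 v 0 k‖
            + ‖lam‖ * ‖v k‖ := t1
        _ ≤ ((2*M+1)^k * ‖lam‖) * (2*M) + ‖lam‖ * 1 := by
            have hA1 : ‖Zf c0 v lam k - Zf c0 v 0 k‖ *
                ‖Zf c0 v lam k + Zf c0 v 0 k‖
                ≤ ((2*M+1)^k * ‖lam‖) * (2*M) :=
              mul_le_mul hd hsum (norm_nonneg _) (by positivity)
            have hA2 : ‖lam‖ * ‖v k‖ ≤ ‖lam‖ * 1 :=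
              mul_le_mul_of_nonneg_left hvk hl0
            linarith
        _ = (2*M*(2*M+1)^k + 1) * ‖lam‖ := by ring
        _ ≤ ((2*M+1)*(2*M+1)^k) * ‖lam‖ := by
            have h := mul_nonneg (sub_nonneg.2 hP1) hl0
            nlinarith
        _ = (2*M+1)^(k+1) * ‖lam‖ := by rw [pow_succ]; ring

set_option maxHeartbeats 2000000

/-- Let `c_0 ∉ M`.  Then for `δ_0` small enough, for each fixed `ω = (v_0, v_1, ...) ∈
D(0,1)^ℕ`: the critical point `0` escapes for every `λ ∈ D(0,δ_0)` (parameters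
`c_n = c_0 + λ v_n`); the functions `λ ↦ 2^{-n} ln |f^n_{λ,ω}(0)|` converge locally
uniformly on `D(0,δ_0)` to `λ ↦ g_{λ,ω}(0)`; and the limit `λ ↦ g_{λ,ω}(0)` is harmonic on
`D(0,δ_0)` — being harmonic on a disk, it is the real part of a holomorphic function. -/
theorem stmt16 (c0 : ℂ) (hc0 : c0 ∉ mandelbrot) :
    ∃ δ0 : ℝ, 0 < δ0 ∧
      ∀ v : ℕ → ℂ, (∀ n, ‖v n‖ < 1) →
        (∀ lam ∈ ball (0 : ℂ) δ0,
          Tendsto (fun n => ‖orbitC (fun k => c0 + lam * v k) 0 n‖)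
            atTop atTop) ∧
        TendstoLocallyUniformlyOn
          (fun (n : ℕ) (lam : ℂ) =>
            Real.log (‖orbitC (fun k => c0 + lam * v k) 0 n‖) / 2 ^ n)
          (fun lam => green0 (fun k => c0 + lam * v k)) atTop (ball (0 : ℂ) δ0) ∧
        ∃ F : ℂ → ℂ, DifferentiableOn ℂ F (ball (0 : ℂ) δ0) ∧
          ∀ lam ∈ ball (0 : ℂ) δ0,
            green0 (fun k => c0 + lam * v k) = (F lam).re := by
  classical
  have hA0 := norm_nonneg c0
  set A : ℝ := ‖c0‖ + 1 with hAdef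
  have hA : 1 ≤ A := by simp only [hAdef]; linarith
  set R : ℝ := A + 3 with hRdef
  have hR4 : 4 ≤ R := by simp only [hRdef]; linarith
  obtain ⟨N, hN⟩ : ∃ N : ℕ, R + 1 < ‖orbitC (fun _ => c0) 0 N‖ := by
    rw [mandelbrot, Set.mem_setOf_eq, isBounded_iff_forall_norm_le] at hc0
    push_neg at hc0
    obtain ⟨x, hx, hlt⟩ := hc0 (R + 1)
    obtain ⟨N, rfl⟩ := hx
    exact ⟨N, by simpa using hlt⟩
  obtain ⟨M, hM2, hM⟩ : ∃ M : ℝ, 2 ≤ M ∧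
      ∀ k ≤ N, ‖orbitC (fun _ => c0) 0 k‖ + 2 ≤ M := by
    refine ⟨(Finset.range (N+1)).sup' ⟨0, by simp⟩
      (fun k => ‖orbitC (fun _ => c0) 0 k‖) + 2, ?_, ?_⟩
    · have h0 := Finset.le_sup' (fun k => ‖orbitC (fun _ => c0) 0 k‖)
        (Finset.mem_range.2 (Nat.succ_pos N))
      have := norm_nonneg (orbitC (fun _ => c0) 0 0)
      linarith
    · intro k hk
      have := Finset.le_sup' (fun k => ‖orbitC (fun _ => c0) 0 k‖)
        (Finset.mem_range.2 (Nat.lt_succ_of_le hk))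
      linarith
  have hMpow : (0:ℝ) < (2*M+1)^N := by positivity
  set δ0 : ℝ := min 1 (1 / (2 * (2*M+1)^N)) with hδdef
  have hδpos : 0 < δ0 := lt_min one_pos (by positivity)
  have hδ1 : δ0 ≤ 1 := min_le_left _ _
  have hδhalf : (2*M+1)^N * δ0 ≤ 1/2 := by
    have h := min_le_right 1 (1 / (2 * (2*M+1)^N))
    calc (2*M+1)^N * δ0 ≤ (2*M+1)^N * (1/(2*(2*M+1)^N)) :=
          mul_le_mul_of_nonneg_left h (le_of_lt hMpow)
      _ = 1/2 := by field_simp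
  refine ⟨δ0, hδpos, fun v hv => ?_⟩
  -- base identification
  have hzero : Zf c0 v 0 = orbitC (fun _ => c0) 0 := by
    have h : (fun k => c0 + (0:ℂ) * v k) = fun _ : ℕ => c0 := by
      funext k; simp
    show orbitC (fun k => c0 + (0:ℂ) * v k) 0 = orbitC (fun _ => c0) 0
    rw [h]
  have hMZ : ∀ k ≤ N, ‖Zf c0 v 0 k‖ + 2 ≤ M := by
    intro k hk; rw [hzero]; exact hM k hk
  have hball : ∀ lam : ℂ, lam ∈ ball (0:ℂ) δ0 ↔ ‖lam‖ < δ0 := by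
    intro lam; rw [mem_ball_zero_iff]
  -- bound on the parameters
  have hcb : ∀ lam : ℂ, ‖lam‖ < δ0 → ∀ n, ‖c0 + lam * v n‖ ≤ A := by
    intro lam hl n
    have h1 := norm_add_le c0 (lam * v n)
    rw [norm_mul] at h1
    have h2 := norm_nonneg lam
    have h3 := norm_nonneg (v n)
    have h4 := hv n
    have h5 : ‖lam‖ * ‖v n‖ ≤ 1 := by nlinarith
    simp only [hAdef]; linarith
  -- perturbation at time N
  have hpert : ∀ lam : ℂ, ‖lam‖ < δ0 →
      ‖Zf c0 v lam N - Zf c0 v 0 N‖ ≤ 1/2 := by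
    intro lam hl
    have h1 : (2*M+1)^N * ‖lam‖ ≤ 1/2 := by
      have := mul_le_mul_of_nonneg_left (le_of_lt hl) (le_of_lt hMpow)
      linarith
    have h2 := perturb c0 v hv M N hMZ lam h1 N le_rfl
    linarith
  have hZN : ∀ lam : ℂ, ‖lam‖ < δ0 → R + 1/2 ≤ ‖Zf c0 v lam N‖ := by
    intro lam hl
    have h1 := hpert lam hl
    have h2 : |‖Zf c0 v lam N‖ - ‖Zf c0 v 0 N‖|
        ≤ ‖Zf c0 v lam N - Zf c0 v 0 N‖ :=
      abs_norm_sub_norm_le _ _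
    obtain ⟨h3, _⟩ := abs_le.1 h2
    rw [hzero] at *
    linarith
  -- lower bounds along the orbit
  have hRlow : ∀ lam : ℂ, ‖lam‖ < δ0 → ∀ n, N ≤ n →
      R ≤ ‖Zf c0 v lam n‖ := by
    intro lam hl n hn
    have hg := growth (fun k => c0 + lam * v k) hA (hcb lam hl)
      (le_trans (by linarith) (hZN lam hl)) (n - N)
    rw [Nat.add_sub_cancel' hn] at hg
    have h2j : (1:ℝ) ≤ 2 ^ (n - N) := one_le_pow₀ one_le_two
    show R ≤ ‖orbitC (fun k => c0 + lam * v k) 0 n‖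
    nlinarith
  have hZne : ∀ lam : ℂ, ‖lam‖ < δ0 → ∀ n, N ≤ n → Zf c0 v lam n ≠ 0 := by
    intro lam hl n hn h
    have := hRlow lam hl n hn
    rw [h] at this
    simp at this
    linarith
  -- escape
  have hesc : ∀ lam : ℂ, ‖lam‖ < δ0 →
      Tendsto (fun n => ‖Zf c0 v lam n‖) atTop atTop := by
    intro lam hl
    have hg := growth (fun k => c0 + lam * v k) hA (hcb lam hl)
      (le_trans (by linarith) (hZN lam hl))
    have h1 : Tendsto (fun j : ℕ => (2:ℝ) ^ j * R) atTop atTop :=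
      (tendsto_pow_atTop_atTop_of_one_lt one_lt_two).atTop_mul_const (by linarith)
    have h2 : Tendsto (fun j : ℕ => ‖Zf c0 v lam (N + j)‖) atTop atTop :=
      tendsto_atTop_mono hg h1
    have h3 : Tendsto (fun j : ℕ => ‖Zf c0 v lam (j + N)‖) atTop atTop := by
      simpa [Nat.add_comm] using h2
    exact (tendsto_add_atTop_iff_nat N).mp h3

  -- small multiplier W
  have hWsmall : ∀ lam : ℂ, ‖lam‖ < δ0 → ∀ n, N ≤ n →
      ‖(1 + (c0 + lam * v n) / (Zf c0 v lam n)^2) - 1‖ ≤ 1/2 := by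
    intro lam hl n hn
    have he : (1 + (c0 + lam * v n) / (Zf c0 v lam n)^2) - 1
        = (c0 + lam * v n) / (Zf c0 v lam n)^2 := by ring
    rw [he, norm_div, norm_pow]
    have hc := hcb lam hl n
    have hz := hRlow lam hl n hn
    have hzpos : (0:ℝ) < ‖Zf c0 v lam n‖ ^ 2 := by nlinarith
    rw [div_le_iff₀ hzpos]
    nlinarith
  -- one-step identity for the normalized logs
  have hstep : ∀ lam : ℂ, ‖lam‖ < δ0 → ∀ n, N ≤ n →
      Real.log (‖Zf c0 v lam (n+1)‖) / 2^(n+1)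
        - Real.log (‖Zf c0 v lam n‖) / 2^n
      = Real.log (‖1 + (c0 + lam * v n) / (Zf c0 v lam n)^2‖) / 2^(n+1) := by
    intro lam hl n hn
    have hz := hRlow lam hl n hn
    have hzne := hZne lam hl n hn
    have hW := hWsmall lam hl n hn
    have hWne : (1:ℂ) + (c0 + lam * v n) / (Zf c0 v lam n)^2 ≠ 0 := by
      intro h
      rw [h] at hW
      simp at hW
      norm_num at hW
    have hZ1 : Zf c0 v lam (n+1)
        = (Zf c0 v lam n)^2 * (1 + (c0 + lam * v n) / (Zf c0 v lam n)^2) := by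
      rw [Zf_succ]
      field_simp
    have habs : ‖Zf c0 v lam (n+1)‖
        = ‖Zf c0 v lam n‖ ^ 2
          * ‖1 + (c0 + lam * v n) / (Zf c0 v lam n)^2‖ := by
      rw [hZ1, norm_mul, norm_pow]
    have habsne : ‖Zf c0 v lam n‖ ≠ 0 := by
      intro h; rw [h] at hz; linarith
    have hlog : Real.log (‖Zf c0 v lam (n+1)‖)
        = 2 * Real.log (‖Zf c0 v lam n‖)
          + Real.log (‖1 + (c0 + lam * v n) / (Zf c0 v lam n)^2‖) := by
      rw [habs, Real.log_mul (pow_ne_zero 2 habsne) ((norm_ne_zero_iff).2 hWne),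
        Real.log_pow]
      push_cast
      ring
    rw [hlog]
    have h2n : (0:ℝ) < 2^n := by positivity
    rw [pow_succ]
    field_simp
    ring
  -- difference bound
  have hdiffstep : ∀ lam : ℂ, ‖lam‖ < δ0 → ∀ n, N ≤ n →
      |Real.log (‖Zf c0 v lam (n+1)‖) / 2^(n+1)
        - Real.log (‖Zf c0 v lam n‖) / 2^n| ≤ (1/2:ℝ)^(n+1) := by
    intro lam hl n hn
    rw [hstep lam hl n hn, abs_div]
    have hW := (log_bound (hWsmall lam hl n hn)).2.1
    have h1 : |(2:ℝ)^(n+1)| = 2^(n+1) := abs_of_pos (by positivity)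
    have h3 : (1/2:ℝ)^(n+1) = 1/2^(n+1) := by rw [div_pow, one_pow]
    rw [h1, h3]
    have h2 : (0:ℝ) < 2^(n+1) := by positivity
    rw [div_le_div_iff₀ h2 h2]
    nlinarith [abs_nonneg (Real.log (‖1 + (c0 + lam * v n) / (Zf c0 v lam n)^2‖))]
  -- Cauchy-type estimate
  have hcauchy : ∀ lam : ℂ, ‖lam‖ < δ0 → ∀ n, N ≤ n → ∀ m : ℕ,
      |Real.log (‖Zf c0 v lam (n+m)‖) / 2^(n+m)
        - Real.log (‖Zf c0 v lam n‖) / 2^n| ≤ (1/2:ℝ)^n - (1/2:ℝ)^(n+m) := by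
    intro lam hl n hn m
    induction m with
    | zero => simp
    | succ m ih =>
        have h1 := hdiffstep lam hl (n+m) (le_trans hn (Nat.le_add_right n m))
        have h2 := abs_sub_le
          (Real.log (‖Zf c0 v lam (n+m+1)‖) / 2^(n+m+1))
          (Real.log (‖Zf c0 v lam (n+m)‖) / 2^(n+m))
          (Real.log (‖Zf c0 v lam n‖) / 2^n)
        have h3 : (1/2:ℝ)^(n+(m+1)) = (1/2:ℝ)^(n+m) * (1/2) := pow_succ _ _
        have h4 : (n+(m+1)) = (n+m)+1 := rfl
        rw [h4]
        rw [h4] at h3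
        calc |Real.log (‖Zf c0 v lam ((n+m)+1)‖) / 2^((n+m)+1)
            - Real.log (‖Zf c0 v lam n‖) / 2^n| ≤ _ := h2
          _ ≤ (1/2:ℝ)^((n+m)+1) + ((1/2:ℝ)^n - (1/2:ℝ)^(n+m)) := by
              have := ih
              linarith
          _ ≤ (1/2:ℝ)^n - (1/2:ℝ)^((n+m)+1) := by
              have h5 : (1/2:ℝ)^((n+m)+1) = (1/2:ℝ)^(n+m) * (1/2) := pow_succ _ _
              linarith
  -- pointwise limits
  have hlim : ∀ lam : ℂ, ‖lam‖ < δ0 →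
      Tendsto (fun n => Real.log (‖Zf c0 v lam n‖) / 2^n) atTop
        (𝓝 (green0 (fun k => c0 + lam * v k))) := by
    intro lam hl
    have hcs : CauchySeq (fun m => Real.log (‖Zf c0 v lam (N+m)‖) / 2^(N+m)) := by
      apply cauchySeq_of_le_geometric (1/2 : ℝ) ((1/2:ℝ)^N) (by norm_num)
      intro m
      rw [Real.dist_eq]
      have h1 := hdiffstep lam hl (N+m) (Nat.le_add_right N m)
      have h2 : |Real.log (‖Zf c0 v lam (N+m)‖) / 2^(N+m)
          - Real.log (‖Zf c0 v lam (N+(m+1))‖) / 2^(N+(m+1))|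
          = |Real.log (‖Zf c0 v lam ((N+m)+1)‖) / 2^((N+m)+1)
          - Real.log (‖Zf c0 v lam (N+m)‖) / 2^(N+m)| := by
        rw [abs_sub_comm]
        rfl
      rw [h2]
      calc _ ≤ ((1/2:ℝ))^((N+m)+1) := h1
        _ ≤ (1/2:ℝ)^N * (1/2)^m := by
            rw [pow_succ, pow_add]
            nlinarith [pow_pos (by norm_num : (0:ℝ) < 1/2) N,
              pow_pos (by norm_num : (0:ℝ) < 1/2) m]
    obtain ⟨L, hL⟩ := cauchySeq_tendsto_of_complete hcs
    have hLfull : Tendsto (fun n => Real.log (‖Zf c0 v lam n‖) / 2^n) atTop (𝓝 L) := by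
      have h2 : Tendsto (fun m => Real.log (‖Zf c0 v lam (m+N)‖) / 2^(m+N))
          atTop (𝓝 L) := by simpa [Nat.add_comm] using hL
      exact (tendsto_add_atTop_iff_nat N).mp h2
    have hgval : green0 (fun k => c0 + lam * v k) = L := by
      unfold green0
      rw [if_pos (hesc lam hl)]
      exact hLfull.limUnder_eq
    rw [hgval]
    exact hLfull
  refine ⟨fun lam hlam => hesc lam ((hball lam).1 hlam), ?_, ?_⟩
  · -- locally uniform convergence
    have hUC : UniformCauchySeqOn
        (fun n lam => Real.log (‖Zf c0 v lam n‖) / 2^n) atTop (ball (0:ℂ) δ0) := by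
      rw [Metric.uniformCauchySeqOn_iff]
      intro ε hε
      obtain ⟨k0, hk0⟩ := exists_pow_lt_of_lt_one hε (by norm_num : (1:ℝ)/2 < 1)
      refine ⟨max N k0, fun m hm n hn x hx => ?_⟩
      have hxδ : ‖x‖ < δ0 := (hball x).1 hx
      have key : ∀ p q, N ≤ q → q ≤ p →
          dist (Real.log (‖Zf c0 v x p‖) / 2^p)
            (Real.log (‖Zf c0 v x q‖) / 2^q) ≤ (1/2:ℝ)^q := by
        intro p q hq hpq
        rw [Real.dist_eq]
        have h1 := hcauchy x hxδ q hq (p - q)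
        rw [Nat.add_sub_cancel' hpq] at h1
        have h2 : (0:ℝ) ≤ (1/2:ℝ)^(q + (p - q)) := by positivity
        have h3 : (1/2:ℝ)^(q + (p-q)) = (1/2:ℝ)^p := by rw [Nat.add_sub_cancel' hpq]
        linarith [h1, h2, h3 ▸ h2]
      have hfin : ∀ q, max N k0 ≤ q → (1/2:ℝ)^q < ε := by
        intro q hq
        have h4 : (1/2:ℝ)^q ≤ (1/2:ℝ)^k0 :=
          pow_le_pow_of_le_one (by norm_num) (by norm_num) (le_trans (le_max_right N k0) hq)
        linarith
      rcases le_total n m with h | h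
      · have hk := key m n (le_trans (le_max_left N k0) hn) h
        exact lt_of_le_of_lt hk (hfin n hn)
      · have hk := key n m (le_trans (le_max_left N k0) hm) h
        rw [dist_comm]
        exact lt_of_le_of_lt hk (hfin m hm)
    exact (hUC.tendstoUniformlyOn_of_tendsto
      (fun x hx => hlim x ((hball x).1 hx))).tendstoLocallyUniformlyOn
  · -- the limit is the real part of a holomorphic function
    have hb0abs : R + 1 < ‖Zf c0 v 0 N‖ := by rw [hzero]; exact hN
    have hb0 : Zf c0 v 0 N ≠ 0 := by
      intro h
      rw [h] at hb0abs
      simp at hb0abs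
      linarith
    have hquot : ∀ lam : ℂ, ‖lam‖ < δ0 →
        ‖Zf c0 v lam N / Zf c0 v 0 N - 1‖ ≤ 1/2 := by
      intro lam hl
      rw [div_sub_one hb0, norm_div]
      have h1 := hpert lam hl
      have hbpos : (0:ℝ) < ‖Zf c0 v 0 N‖ := by linarith
      rw [div_le_iff₀ hbpos]
      nlinarith
    have hWs : ∀ (j : ℕ) (lam : ℂ), ‖lam‖ < δ0 →
        ‖(1 + (c0 + lam * v (N+j)) / (Zf c0 v lam (N+j))^2) - 1‖ ≤ 1/2 :=
      fun j lam hl => hWsmall lam hl (N+j) (Nat.le_add_right N j)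
    set F : ℂ → ℂ := fun lam =>
      ((((2:ℝ)^N)⁻¹ : ℝ) : ℂ) * ((Real.log (‖Zf c0 v 0 N‖) : ℂ)
          + Complex.log (Zf c0 v lam N / Zf c0 v 0 N))
        + ∑' j : ℕ, ((((2:ℝ)^(N+j+1))⁻¹ : ℝ) : ℂ)
            * Complex.log (1 + (c0 + lam * v (N+j)) / (Zf c0 v lam (N+j))^2) with hFdef
    have hrle : ∀ j : ℕ, ((2:ℝ)^(N+j+1))⁻¹ ≤ (1/2:ℝ)^j := by
      intro j
      have h1 : (2:ℝ)^j ≤ (2:ℝ)^(N+j+1) := pow_le_pow_right₀ one_le_two (by omega)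
      have h2 : (1/2:ℝ)^j = ((2:ℝ)^j)⁻¹ := by rw [div_pow, one_pow, one_div]
      rw [h2]
      exact inv_anti₀ (by positivity) h1
    have hu : Summable (fun j : ℕ => 5 * (1/2:ℝ)^j) :=
      (summable_geometric_of_lt_one (by norm_num) (by norm_num)).mul_left 5
    have hnormbound : ∀ (j : ℕ) (lam : ℂ), lam ∈ ball (0:ℂ) δ0 →
        ‖((((2:ℝ)^(N+j+1))⁻¹ : ℝ) : ℂ)
            * Complex.log (1 + (c0 + lam * v (N+j)) / (Zf c0 v lam (N+j))^2)‖
          ≤ 5 * (1/2:ℝ)^j := by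
      intro j lam hl
      have h1 := (log_bound (hWs j lam ((hball lam).1 hl))).2.2
      rw [norm_mul, Complex.norm_real]
      have h2 : ‖((2:ℝ)^(N+j+1))⁻¹‖ = ((2:ℝ)^(N+j+1))⁻¹ := Real.norm_of_nonneg (by positivity)
      rw [h2]
      have h3 := hrle j
      have h4 : (0:ℝ) ≤ ((2:ℝ)^(N+j+1))⁻¹ := by positivity
      have h5 := norm_nonneg
        (Complex.log (1 + (c0 + lam * v (N+j)) / (Zf c0 v lam (N+j))^2))
      nlinarith [pow_pos (by norm_num : (0:ℝ) < 1/2) j]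
    have hWdiffat : ∀ (j : ℕ) (lam : ℂ), lam ∈ ball (0:ℂ) δ0 →
        DifferentiableAt ℂ
          (fun lam => 1 + (c0 + lam * v (N+j)) / (Zf c0 v lam (N+j))^2) lam := by
      intro j lam hl
      have hl' := (hball lam).1 hl
      have hz := hZne lam hl' (N+j) (Nat.le_add_right N j)
      apply DifferentiableAt.const_add
      exact DifferentiableAt.div
        ((differentiableAt_const c0).add (differentiableAt_id.mul (differentiableAt_const _)))
        ((Zf_diff c0 v (N+j) lam).pow 2)
        (pow_ne_zero 2 hz)
    have hFdiff : DifferentiableOn ℂ F (ball (0:ℂ) δ0) := by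
      apply DifferentiableOn.add
      · intro lam hl
        apply DifferentiableAt.differentiableWithinAt
        apply DifferentiableAt.const_mul
        apply DifferentiableAt.const_add
        apply DifferentiableAt.clog
        · exact (Zf_diff c0 v N lam).div_const _
        · exact (log_bound (hquot lam ((hball lam).1 hl))).1
      · apply differentiableOn_tsum_of_summable_norm hu ?_ isOpen_ball hnormbound
        intro j
        intro lam hl
        apply DifferentiableAt.differentiableWithinAt
        apply DifferentiableAt.const_mul
        exact (hWdiffat j lam hl).clog (log_bound (hWs j lam ((hball lam).1 hl))).1
    refine ⟨F, hFdiff, ?_⟩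
    intro lam hlam
    have hl := (hball lam).1 hlam
    set Lg := green0 (fun k => c0 + lam * v k) with hLgdef
    have hL := hlim lam hl
    have htel : ∀ m : ℕ, (∑ j ∈ Finset.range m, ((2:ℝ)^(N+j+1))⁻¹
          * Real.log (‖1 + (c0 + lam * v (N+j)) / (Zf c0 v lam (N+j))^2‖))
        = Real.log (‖Zf c0 v lam (N+m)‖) / 2^(N+m)
          - Real.log (‖Zf c0 v lam N‖) / 2^N := by
      intro m
      induction m with
      | zero => simp
      | succ m ih =>
          rw [Finset.sum_range_succ, ih]
          have h1 := hstep lam hl (N+m) (Nat.le_add_right N m)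
          have h3 : (N + (m+1)) = (N+m)+1 := rfl
          rw [h3, inv_mul_eq_div, ← h1]
          ring
    have hZNne : ‖Zf c0 v lam N‖ ≠ 0 := by
      have h := hRlow lam hl N le_rfl
      intro hh
      rw [hh] at h
      linarith
    have habs_re : ∀ j : ℕ, |((2:ℝ)^(N+j+1))⁻¹
        * Real.log (‖1 + (c0 + lam * v (N+j)) / (Zf c0 v lam (N+j))^2‖)|
        ≤ (1/2:ℝ)^j := by
      intro j
      have h1 := (log_bound (hWs j lam hl)).2.1
      rw [_root_.abs_mul, _root_.abs_of_nonneg (by positivity : (0:ℝ) ≤ ((2:ℝ)^(N+j+1))⁻¹)]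
      have h3 := hrle j
      nlinarith [abs_nonneg (Real.log (
          ‖1 + (c0 + lam * v (N+j)) / (Zf c0 v lam (N+j))^2‖)),
        pow_pos (by norm_num : (0:ℝ) < 1/2) j,
        inv_pos.2 (pow_pos (by norm_num : (0:ℝ) < 2) (N+j+1))]
    have hsumnorm : Summable (fun j : ℕ => ‖((2:ℝ)^(N+j+1))⁻¹
        * Real.log (‖1 + (c0 + lam * v (N+j)) / (Zf c0 v lam (N+j))^2‖)‖) := by
      apply Summable.of_nonneg_of_le (fun j => norm_nonneg _) (fun j => ?_)
        (summable_geometric_of_lt_one (by norm_num : (0:ℝ) ≤ 1/2) (by norm_num))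
      rw [Real.norm_eq_abs]
      exact habs_re j
    have hshift : Tendsto (fun m => Real.log (‖Zf c0 v lam (N+m)‖) / 2^(N+m))
        atTop (𝓝 Lg) := by
      have h := hL.comp (tendsto_add_atTop_nat N)
      simpa only [Function.comp_def, Nat.add_comm N] using h
    have hhs : HasSum (fun j : ℕ => ((2:ℝ)^(N+j+1))⁻¹
          * Real.log (‖1 + (c0 + lam * v (N+j)) / (Zf c0 v lam (N+j))^2‖))
        (Lg - Real.log (‖Zf c0 v lam N‖) / 2^N) := by
      rw [hasSum_iff_tendsto_nat_of_summable_norm hsumnorm]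
      have heq : (fun m => ∑ j ∈ Finset.range m, ((2:ℝ)^(N+j+1))⁻¹
          * Real.log (‖1 + (c0 + lam * v (N+j)) / (Zf c0 v lam (N+j))^2‖))
          = fun m => Real.log (‖Zf c0 v lam (N+m)‖) / 2^(N+m)
            - Real.log (‖Zf c0 v lam N‖) / 2^N := funext htel
      rw [heq]
      exact hshift.sub_const _
    have hsumcx : Summable (fun j : ℕ => ((((2:ℝ)^(N+j+1))⁻¹ : ℝ) : ℂ)
        * Complex.log (1 + (c0 + lam * v (N+j)) / (Zf c0 v lam (N+j))^2)) := by
      apply Summable.of_norm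
      exact Summable.of_nonneg_of_le (fun j => norm_nonneg _)
        (fun j => hnormbound j lam hlam) hu
    have hre : (F lam).re = Lg := by
      simp only [hFdef]
      rw [Complex.add_re]
      have hT1 : (((((2:ℝ)^N)⁻¹ : ℝ) : ℂ) * ((Real.log (‖Zf c0 v 0 N‖) : ℂ)
          + Complex.log (Zf c0 v lam N / Zf c0 v 0 N))).re
          = Real.log (‖Zf c0 v lam N‖) / 2^N := by
        rw [Complex.re_ofReal_mul, Complex.add_re, Complex.ofReal_re, Complex.log_re, norm_div,
          Real.log_div hZNne (norm_ne_zero_iff.2 hb0)]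
        ring
      have hT2 : (∑' j : ℕ, ((((2:ℝ)^(N+j+1))⁻¹ : ℝ) : ℂ)
            * Complex.log (1 + (c0 + lam * v (N+j)) / (Zf c0 v lam (N+j))^2)).re
          = Lg - Real.log (‖Zf c0 v lam N‖) / 2^N := by
        calc (∑' j : ℕ, ((((2:ℝ)^(N+j+1))⁻¹ : ℝ) : ℂ)
              * Complex.log (1 + (c0 + lam * v (N+j)) / (Zf c0 v lam (N+j))^2)).re
            = ∑' j : ℕ, (((((2:ℝ)^(N+j+1))⁻¹ : ℝ) : ℂ)
              * Complex.log (1 + (c0 + lam * v (N+j)) / (Zf c0 v lam (N+j))^2)).re := by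
              simpa using Complex.reCLM.map_tsum hsumcx
          _ = ∑' j : ℕ, ((2:ℝ)^(N+j+1))⁻¹
              * Real.log (‖1 + (c0 + lam * v (N+j)) / (Zf c0 v lam (N+j))^2‖) := by
              apply tsum_congr
              intro j
              rw [Complex.re_ofReal_mul, Complex.log_re]
          _ = Lg - Real.log (‖Zf c0 v lam N‖) / 2^N := hhs.tsum_eq
      rw [hT1, hT2]
      ring
    rw [hre]
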